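/- Let A = {τ₁ < τ₂ < … < τₘ} be a finite subset of ℕ and define dist(A) = ∏_{j=1}^{m-1} (1 + |τ_{j+1} − τ_j|). For any spanning tree 𝒯 on the vertex set A with edge set E(𝒯), one has dist(A) ≤ ∏_{{τ,τ'} ∈ E(𝒯)} (1 + |τ' − τ|). -/

import Mathlib

/-- Weight of an (unordered) edge {a,b}: 1 + |b - a|. -/
noncomputable def edgeWeight : Sym2 ℕ → ℝ :=
  Sym2.lift ⟨fun a b => 1 + |(b : ℝ) - (a : ℝ)|, fun a b => by simp [abs_sub_comm]⟩

/-- dist(A) = product of (1 + |τ_{j+1} - τ_j|) over consecutive elements of A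
in increasing order. -/
noncomputable def distA (A : Finset ℕ) : ℝ :=
  (List.zipWith (fun a b : ℕ => 1 + |(b : ℝ) - (a : ℝ)|)
    (A.sort (· ≤ ·)) (A.sort (· ≤ ·)).tail).prod


noncomputable def w (a b : ℕ) : ℝ := 1 + |(b : ℝ) - (a : ℝ)|

noncomputable def distL (l : List ℕ) : ℝ := (List.zipWith w l l.tail).prod

@[simp] lemma distL_nil : distL [] = 1 := rfl
@[simp] lemma distL_singleton (a : ℕ) : distL [a] = 1 := rfl
@[simp] lemma distL_cons_cons (a b : ℕ) (t : List ℕ) :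
    distL (a :: b :: t) = w a b * distL (b :: t) := rfl

lemma one_le_w (a b : ℕ) : 1 ≤ w a b := by
  simp [w]

lemma one_le_distL (l : List ℕ) : 1 ≤ distL l := by
  induction l with
  | nil => simp
  | cons a t ih =>
    cases t with
    | nil => simp
    | cons b t' =>
      rw [distL_cons_cons]
      nlinarith [one_le_w a b, ih]

lemma distL_pos (l : List ℕ) : 0 < distL l := lt_of_lt_of_le one_pos (one_le_distL l)

lemma distL_concat_cons (l₁ : List ℕ) (a c : ℕ) (l₂ : List ℕ) :
    distL ((l₁ ++ [a]) ++ c :: l₂) = distL (l₁ ++ [a]) * w a c * distL (c :: l₂) := by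
  induction l₁ with
  | nil => simp
  | cons x t ih =>
    cases t with
    | nil => simp [distL_cons_cons, mul_assoc, mul_comm, mul_left_comm]
    | cons y t' =>
      have h1 : ((x :: y :: t') ++ [a]) ++ c :: l₂ = x :: ((y :: t' ++ [a]) ++ c :: l₂) := by simp
      have h2 : (y :: t' ++ [a]) ++ c :: l₂ = y :: ((t' ++ [a]) ++ c :: l₂) := by simp
      rw [h1, h2]
      have h3 : ∀ r : List ℕ, distL (x :: y :: r) = w x y * distL (y :: r) := fun r => rfl
      rw [h3, ← h2, ih]
      have h4 : (x :: y :: t') ++ [a] = x :: y :: (t' ++ [a]) := by simp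
      rw [h4, distL_cons_cons]
      ring_nf
      rw [show y :: t' ++ [a] = y :: (t' ++ [a]) by simp]
      ring

lemma w_le_w_of_abs (a b c : ℕ) (h : |(b:ℝ) - a| ≤ |(c:ℝ) - a|) : w a b ≤ w a c := by
  simp only [w]; linarith

lemma w_mono {a b c d : ℕ} (h : |(b:ℝ) - a| ≤ |(d:ℝ) - c|) : w a b ≤ w c d := by
  simp only [w]; linarith

lemma w_comm (a b : ℕ) : w a b = w b a := by simp [w, abs_sub_comm]

lemma key_list (l₁ l₂ : List ℕ) (b u : ℕ)
    (hs : List.Pairwise (· < ·) (l₁ ++ b :: l₂)) (hu : u ∈ l₁ ++ l₂) :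
    distL (l₁ ++ b :: l₂) ≤ w b u * distL (l₁ ++ l₂) := by
  rcases List.eq_nil_or_concat l₁ with rfl | ⟨t, a, rfl⟩
  · -- l₁ = []
    simp only [List.nil_append] at hs hu ⊢
    cases l₂ with
    | nil => simp at hu
    | cons c t =>
      have hbc : b < c := (List.pairwise_cons.mp hs).1 c (by simp)
      have hcu : c ≤ u := by
        rcases List.mem_cons.mp hu with rfl | hmem
        · exact le_refl _
        · exact le_of_lt ((List.pairwise_cons.mp (List.pairwise_cons.mp hs).2).1 u hmem)
      rw [distL_cons_cons]
      refine mul_le_mul_of_nonneg_right ?_ (le_of_lt (distL_pos _))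
      apply w_le_w_of_abs
      have h1 : ((c:ℝ)) - b ≤ (u:ℝ) - b := by
        have : (c:ℝ) ≤ u := by exact_mod_cast hcu
        linarith
      have h2 : (0:ℝ) ≤ (c:ℝ) - b := by
        have : (b:ℝ) ≤ c := by exact_mod_cast hbc.le
        linarith
      rw [abs_of_nonneg h2, abs_of_nonneg (le_trans h2 h1)]
      exact h1
  · -- l₁ = t ++ [a]
    rw [List.concat_eq_append] at hs hu ⊢
    have hpw := (List.pairwise_append.mp hs)
    have hab : a < b := hpw.2.2 a (by simp) b (by simp)
    have hua : ∀ x ∈ t ++ [a], x ≤ a := by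
      intro x hx
      rcases List.mem_append.mp hx with hx | hx
      · exact le_of_lt ((List.pairwise_append.mp hpw.1).2.2 x hx a (by simp))
      · simp at hx; omega
    cases l₂ with
    | nil =>
      have h := distL_concat_cons t a b []
      simp only [List.append_nil] at h ⊢
      rw [h]
      have hub : u ≤ a := hua u (by simpa using hu)
      have hw : w a b ≤ w b u := by
        apply w_mono
        have h1 : (a:ℝ) ≤ b := by exact_mod_cast hab.le
        have h2 : (u:ℝ) ≤ a := by exact_mod_cast hub
        rw [abs_of_nonneg (by linarith), abs_of_nonpos (by linarith)]
        linarith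
      rw [distL_singleton, mul_one, mul_comm]
      exact mul_le_mul_of_nonneg_right hw (le_of_lt (distL_pos _))
    | cons c t₂ =>
      have hbc : b < c := (List.pairwise_cons.mp hpw.2.1).1 c (by simp)
      have hcy : ∀ y ∈ t₂, c < y := (List.pairwise_cons.mp ((List.pairwise_cons.mp hpw.2.1).2)).1
      rw [distL_concat_cons t a b (c :: t₂), distL_cons_cons, distL_concat_cons t a c t₂]
      have hD1 : 0 < distL (t ++ [a]) := distL_pos _
      have hD2 : 0 < distL (c :: t₂) := distL_pos _
      -- reduce to scalar inequality  w a b * w b c ≤ w b u * w a c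
      have hscalar : w a b * w b c ≤ w b u * w a c := by
        have hcase : u ≤ a ∨ c ≤ u := by
          rcases List.mem_append.mp hu with hx | hx
          · exact Or.inl (hua u hx)
          · rcases List.mem_cons.mp hx with rfl | hx
            · exact Or.inr le_rfl
            · exact Or.inr (hcy u hx).le
        have haR : (a:ℝ) < b := by exact_mod_cast hab
        have hbR : (b:ℝ) < c := by exact_mod_cast hbc
        have habs : (b:ℝ) - a ≤ |(u:ℝ) - b| ∨ (c:ℝ) - b ≤ |(u:ℝ) - b| := by
          rcases hcase with h' | h'
          · left
            have : (u:ℝ) ≤ a := by exact_mod_cast h'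
            rw [abs_of_nonpos (by linarith)]; linarith
          · right
            have : (c:ℝ) ≤ u := by exact_mod_cast h'
            rw [abs_of_nonneg (by linarith)]; linarith
        have habs0 : (0:ℝ) ≤ |(u:ℝ) - b| := abs_nonneg _
        simp only [w]
        rw [abs_of_nonneg (by linarith : (0:ℝ) ≤ (b:ℝ) - a),
            abs_of_nonneg (by linarith : (0:ℝ) ≤ (c:ℝ) - b),
            abs_of_nonneg (by linarith : (0:ℝ) ≤ (c:ℝ) - a)]
        rcases habs with h' | h' <;> nlinarith
      calc distL (t ++ [a]) * w a b * (w b c * distL (c :: t₂))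
          = (w a b * w b c) * (distL (t ++ [a]) * distL (c :: t₂)) := by ring
        _ ≤ (w b u * w a c) * (distL (t ++ [a]) * distL (c :: t₂)) := by
            exact mul_le_mul_of_nonneg_right hscalar (by positivity)
        _ = w b u * (distL (t ++ [a]) * w a c * distL (c :: t₂)) := by ring

noncomputable def distB (B : Finset ℕ) : ℝ := distL (B.sort (· ≤ ·))

lemma key_fin (B : Finset ℕ) (b u : ℕ) (hb : b ∈ B) (hu : u ∈ B) (hub : u ≠ b) :
    distB B ≤ w b u * distB (B.erase b) := by
  have hbs : b ∈ B.sort (· ≤ ·) := (Finset.mem_sort _).mpr hb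
  obtain ⟨l₁, l₂, hsplit⟩ := List.append_of_mem hbs
  have hs : List.Pairwise (· < ·) (l₁ ++ b :: l₂) := by
    rw [← hsplit]; exact (Finset.sortedLT_sort B).pairwise
  have hnd : (l₁ ++ b :: l₂).Nodup := by
    rw [← hsplit]; exact Finset.sort_nodup B _
  have hsub : (l₁ ++ l₂).Sublist (l₁ ++ b :: l₂) :=
    (List.sublist_cons_self b l₂).append_left l₁
  have hnd' : (l₁ ++ l₂).Nodup := hnd.sublist hsub
  have hs' : List.Pairwise (· ≤ ·) (l₁ ++ l₂) := ((hs.sublist hsub).imp le_of_lt)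
  have hbnotin : b ∉ l₁ ++ l₂ := by
    intro hmem
    rcases List.mem_append.mp hmem with h | h
    · exact (List.disjoint_of_nodup_append hnd) h (by simp)
    · have := List.nodup_append.mp hnd
      exact (List.nodup_cons.mp this.2.1).1 h
  have htf : (l₁ ++ l₂).toFinset = B.erase b := by
    ext x
    simp only [List.mem_toFinset, Finset.mem_erase]
    constructor
    · intro hx
      refine ⟨fun h => hbnotin (h ▸ hx), ?_⟩
      rw [← Finset.mem_sort (· ≤ ·), hsplit]
      rcases List.mem_append.mp hx with h | h
      · exact List.mem_append.mpr (Or.inl h)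
      · exact List.mem_append.mpr (Or.inr (List.mem_cons_of_mem _ h))
    · rintro ⟨hxb, hxB⟩
      have : x ∈ l₁ ++ b :: l₂ := by rw [← hsplit]; exact (Finset.mem_sort _).mpr hxB
      rcases List.mem_append.mp this with h | h
      · exact List.mem_append.mpr (Or.inl h)
      · rcases List.mem_cons.mp h with rfl | h
        · exact absurd rfl hxb
        · exact List.mem_append.mpr (Or.inr h)
  have hsort_erase : (B.erase b).sort (· ≤ ·) = l₁ ++ l₂ := by
    rw [← htf]
    exact (List.toFinset_sort (· ≤ ·) hnd').mpr hs'
  have hu' : u ∈ l₁ ++ l₂ := by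
    rw [← List.mem_toFinset, htf]
    exact Finset.mem_erase.mpr ⟨hub, hu⟩
  unfold distB
  rw [hsort_erase, hsplit]
  exact key_list l₁ l₂ b u hs hu'

section Graph
open SimpleGraph

variable {V : Type*} [Fintype V] [DecidableEq V]

lemma exists_adj (G : SimpleGraph V) (hc : G.Connected) (h2 : 1 < Fintype.card V) (v : V) :
    ∃ u, G.Adj v u := by
  obtain ⟨w, hw⟩ := Fintype.exists_ne_of_one_lt_card h2 v
  obtain ⟨p⟩ := hc.preconnected v w
  cases p with
  | nil => exact absurd rfl hw.symm
  | cons h q => exact ⟨_, h⟩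

lemma exists_leaf (G : SimpleGraph V) [DecidableRel G.Adj] (hT : G.IsTree)
    (h2 : 1 < Fintype.card V) :
    ∃ v u, G.Adj v u ∧ G.neighborFinset v = {u} := by
  have hdeg : ∀ v, 1 ≤ G.degree v := by
    intro v
    obtain ⟨u, hu⟩ := exists_adj G hT.isConnected h2 v
    exact Finset.card_pos.mpr ⟨u, (SimpleGraph.mem_neighborFinset G v u).mpr hu⟩
  have hsum : ∑ v, G.degree v = 2 * G.edgeFinset.card :=
    SimpleGraph.sum_degrees_eq_twice_card_edges G
  have hcard : G.edgeFinset.card + 1 = Fintype.card V := hT.card_edgeFinset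
  by_contra hno
  push_neg at hno
  have hdeg2 : ∀ v, 2 ≤ G.degree v := by
    intro v
    by_contra hlt
    push_neg at hlt
    have h1 : G.degree v = 1 := le_antisymm (by omega) (hdeg v)
    obtain ⟨u, hu⟩ := Finset.card_eq_one.mp h1
    have hadj : G.Adj v u := (SimpleGraph.mem_neighborFinset G v u).mp (hu ▸ Finset.mem_singleton_self u)
    exact hno v u hadj hu
  have hle : (∑ _v : V, 2) ≤ ∑ v, G.degree v := Finset.sum_le_sum (fun v _ => hdeg2 v)
  rw [Finset.sum_const, smul_eq_mul] at hle
  have hcardpos : 0 < Fintype.card V := by omega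
  rw [Finset.card_univ] at hle
  omega

end Graph

section Graph2
open SimpleGraph

variable {V : Type*} [DecidableEq V] {G : SimpleGraph V} {v u : V}

lemma nbr_mem_tail (hleaf : ∀ x, G.Adj v x → x = u)
    {x : V} (q : G.Walk v x) (hne : v ≠ x) : u ∈ q.support.tail := by
  cases q with
  | nil => exact absurd rfl hne
  | cons h r =>
    have hb := hleaf _ h
    subst hb
    simp [SimpleGraph.Walk.support_cons]

lemma leaf_not_mem_support (hleaf : ∀ x, G.Adj v x → x = u)
    {x y : V} (p : G.Walk x y) (hp : p.IsPath) (hx : x ≠ v) (hy : y ≠ v) :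
    v ∉ p.support := by
  intro hv
  set q1 := p.takeUntil v hv with hq1
  set q2 := p.dropUntil v hv with hq2
  have hspec : q1.append q2 = p := p.take_spec hv
  have hu1 : u ∈ q1.support := by
    have := nbr_mem_tail (fun x hx' => hleaf x hx') q1.reverse (fun h => hx (h.symm))
    have h2 := List.mem_of_mem_tail this
    rw [SimpleGraph.Walk.support_reverse, List.mem_reverse] at h2
    -- need u ≠ x? no: u ∈ reverse support means u ∈ support
    exact h2
  have hu2 : u ∈ q2.support.tail := nbr_mem_tail hleaf q2 (fun h => hy h.symm)
  have hnd : (q1.support ++ q2.support.tail).Nodup := by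
    rw [← SimpleGraph.Walk.support_append, hspec]
    exact hp.support_nodup
  exact (List.disjoint_of_nodup_append hnd) hu1 hu2

lemma reachable_induce {s : Set V} [DecidablePred (· ∈ s)] {x y : V} (p : G.Walk x y)
    (h : ∀ z ∈ p.support, z ∈ s) :
    (G.induce s).Reachable ⟨x, h x p.start_mem_support⟩ ⟨y, h y p.end_mem_support⟩ := by
  induction p with
  | nil => exact SimpleGraph.Reachable.refl _
  | @cons a b c hadj q ih =>
    have hb : ∀ z ∈ q.support, z ∈ s := fun z hz => h z (by simp [SimpleGraph.Walk.support_cons, hz])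
    have ha : a ∈ s := h a (by simp [SimpleGraph.Walk.support_cons])
    have step : (G.induce s).Adj ⟨a, ha⟩ ⟨b, hb b q.start_mem_support⟩ := hadj
    exact (step.reachable).trans (ih hb)

end Graph2

noncomputable def edgeWeight' : Sym2 ℕ → ℝ :=
  Sym2.lift ⟨fun a b => 1 + |(b : ℝ) - (a : ℝ)|, fun a b => by simp [abs_sub_comm]⟩

lemma edgeWeight'_mk (a b : ℕ) : edgeWeight' s(a, b) = w a b := by
  simp [edgeWeight', w]

lemma one_le_edgeWeight' (e : Sym2 ℕ) : 1 ≤ edgeWeight' e := by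
  induction e using Sym2.ind with
  | _ a b => rw [edgeWeight'_mk]; exact one_le_w a b

theorem main (n : ℕ) : ∀ {V : Type} [Fintype V] [DecidableEq V] (G : SimpleGraph V)
    [DecidableRel G.Adj], G.IsTree → Fintype.card V = n → ∀ f : V → ℕ, Function.Injective f →
    distB (Finset.image f Finset.univ) ≤ ∏ e ∈ G.edgeFinset, edgeWeight' (Sym2.map f e) := by
  induction n using Nat.strong_induction_on with
  | _ n ih =>
    intro V _ _ G _ hT hcard f hf
    have hne : Nonempty V := hT.isConnected.nonempty
    rcases lt_or_ge 1 (Fintype.card V) with h2 | h1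
    · -- inductive step
      obtain ⟨v, u, hadj, hleaf⟩ := exists_leaf G hT h2
      have hleaf' : ∀ x, G.Adj v x → x = u := by
        intro x hx
        have : x ∈ G.neighborFinset v := (SimpleGraph.mem_neighborFinset G v x).mpr hx
        rw [hleaf] at this
        exact Finset.mem_singleton.mp this
      have huv : u ≠ v := hadj.ne'
      set s : Set V := {x | x ≠ v} with hs
      haveI : DecidablePred (· ∈ s) := fun x => instDecidableNot
      set G' : SimpleGraph s := G.induce s with hG'
      haveI : DecidableRel G'.Adj := fun a b => ‹DecidableRel G.Adj› a.1 b.1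
      have hcard' : Fintype.card s = n - 1 := by
        have : Fintype.card s = Fintype.card V - 1 := by
          simp only [hs]
          rw [Set.card_ne_eq]
        omega
      -- G' is a tree
      have hT' : G'.IsTree := by
        constructor
        · -- connected
          rw [SimpleGraph.connected_iff]
          refine ⟨?_, ⟨⟨u, huv⟩⟩⟩
          intro x y
          obtain ⟨p, hp, -⟩ := hT.existsUnique_path x.1 y.1
          have hnv : v ∉ p.support := leaf_not_mem_support hleaf' p hp x.2 y.2
          have hall : ∀ z ∈ p.support, z ∈ s := fun z hz => fun hzv => hnv (hzv ▸ hz)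
          have := reachable_induce (G := G) p hall
          convert this using 2 <;> exact rfl
        · -- acyclic
          intro x c hc
          have hmap : ((c.map (SimpleGraph.Embedding.induce s).toHom).IsCycle) :=
            hc.map (Subtype.val_injective)
          exact hT.IsAcyclic _ hmap
      -- edge decomposition
      have hedge : G.edgeFinset =
          insert s(v, u) (Finset.image (Sym2.map (Subtype.val : s → V)) G'.edgeFinset) := by
        ext e
        induction e using Sym2.ind with
        | _ a b =>
          simp only [SimpleGraph.mem_edgeFinset, SimpleGraph.mem_edgeSet, Finset.mem_insert,
            Finset.mem_image]
          constructor
          · intro hab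
            by_cases hva : a = v
            · subst hva
              left
              rw [Sym2.eq_iff]
              exact Or.inl ⟨rfl, hleaf' b hab⟩
            · by_cases hvb : b = v
              · subst hvb
                left
                rw [Sym2.eq_iff]
                exact Or.inr ⟨hleaf' a hab.symm, rfl⟩
              · right
                refine ⟨s(⟨a, hva⟩, ⟨b, hvb⟩), ?_, rfl⟩
                simp only [SimpleGraph.mem_edgeFinset, SimpleGraph.mem_edgeSet]; exact hab
          · intro h
            rcases h with h | ⟨e', he', hmap⟩
            · rw [Sym2.eq_iff] at h
              rcases h with ⟨rfl, rfl⟩ | ⟨rfl, rfl⟩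
              · exact hadj
              · exact hadj.symm
            · induction e' using Sym2.ind with
              | _ x y =>
                simp only [Sym2.map_pair_eq, Sym2.eq_iff] at hmap
                have hxy : G'.Adj x y := by
                  simpa [SimpleGraph.mem_edgeFinset, SimpleGraph.mem_edgeSet] using he'
                rcases hmap with ⟨rfl, rfl⟩ | ⟨rfl, rfl⟩
                · exact hxy
                · exact hxy.symm
      have hnotmem : s(v, u) ∉ Finset.image (Sym2.map (Subtype.val : s → V)) G'.edgeFinset := by
        intro hmem
        obtain ⟨e', -, hmap⟩ := Finset.mem_image.mp hmem
        induction e' using Sym2.ind with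
        | _ x y =>
          simp only [Sym2.map_pair_eq, Sym2.eq_iff] at hmap
          rcases hmap with ⟨hx, -⟩ | ⟨-, hy⟩
          · exact x.2 hx
          · exact y.2 hy
      -- product decomposition
      have hprod : ∏ e ∈ G.edgeFinset, edgeWeight' (Sym2.map f e) =
          edgeWeight' (Sym2.map f s(v, u)) *
            ∏ e ∈ G'.edgeFinset, edgeWeight' (Sym2.map (f ∘ Subtype.val) e) := by
        rw [hedge, Finset.prod_insert hnotmem, Finset.prod_image]
        · congr 1
          refine Finset.prod_congr rfl fun e _ => ?_
          rw [Sym2.map_map]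
        · intro e₁ _ e₂ _ h
          exact Sym2.map.injective Subtype.val_injective h
      -- IH
      have hIH := @ih (n - 1) (by omega) ↥s _ _ G' _ hT' hcard' (f ∘ Subtype.val)
        (hf.comp Subtype.val_injective)
      -- image relation
      have himg : Finset.image (f ∘ (Subtype.val : s → V)) Finset.univ =
          (Finset.image f Finset.univ).erase (f v) := by
        ext c
        simp only [Finset.mem_image, Finset.mem_erase, Finset.mem_univ, true_and,
          Function.comp_apply]
        constructor
        · rintro ⟨x, rfl⟩
          exact ⟨fun h => x.2 (hf h), x.1, rfl⟩
        · rintro ⟨hcv, x, rfl⟩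
          exact ⟨⟨x, fun h => hcv (by rw [h])⟩, rfl⟩
      -- numeric key step
      have hkey : distB (Finset.image f Finset.univ) ≤
          w (f v) (f u) * distB ((Finset.image f Finset.univ).erase (f v)) :=
        key_fin _ _ _ (Finset.mem_image_of_mem f (Finset.mem_univ v))
          (Finset.mem_image_of_mem f (Finset.mem_univ u)) (fun h => huv (hf h))
      rw [hprod, Sym2.map_pair_eq, edgeWeight'_mk]
      calc distB (Finset.image f Finset.univ)
          ≤ w (f v) (f u) * distB ((Finset.image f Finset.univ).erase (f v)) := hkey
        _ ≤ w (f v) (f u) * ∏ e ∈ G'.edgeFinset, edgeWeight' (Sym2.map (f ∘ Subtype.val) e) := by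
            refine mul_le_mul_of_nonneg_left ?_ (le_trans zero_le_one (one_le_w (f v) (f u)))
            rw [← himg]
            exact hIH
        _ = _ := rfl
    · -- base case : card V = 1
      have h1' : Fintype.card V = 1 := le_antisymm h1 Fintype.card_pos
      have hempty : G.edgeFinset = ∅ := by
        refine Finset.eq_empty_of_forall_notMem fun e => ?_
        induction e using Sym2.ind with
        | _ a b =>
          intro hab
          have : G.Adj a b := by
            simpa [SimpleGraph.mem_edgeFinset, SimpleGraph.mem_edgeSet] using hab
          exact this.ne (Fintype.card_le_one_iff.mp (le_of_eq h1') a b)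
      rw [hempty, Finset.prod_empty]
      have : (Finset.image f Finset.univ).card = 1 := by
        rw [Finset.card_image_of_injective _ hf, Finset.card_univ, h1']
      obtain ⟨b, hb⟩ := Finset.card_eq_one.mp this
      rw [hb]
      unfold distB
      rw [Finset.sort_singleton]
      simp


/-- For any spanning tree on the vertex set A,
dist(A) ≤ ∏_{{τ,τ'} ∈ E(𝒯)} (1 + |τ' - τ|). -/
theorem stmt0 (A : Finset ℕ) (G : SimpleGraph A) [DecidableRel G.Adj]
    (hT : G.IsTree) :
    distA A ≤ ∏ e ∈ G.edgeFinset, edgeWeight (Sym2.map (fun x : A => (x : ℕ)) e) := by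
  have h := main (Fintype.card A) G hT rfl (fun x : A => (x : ℕ)) Subtype.val_injective
  have himg : Finset.image (fun x : A => (x : ℕ)) Finset.univ = A := by
    rw [Finset.univ_eq_attach]
    exact Finset.attach_image_val
  rw [himg] at h
  have hdist : distA A = distB A := rfl
  have hew : edgeWeight = edgeWeight' := rfl
  rw [hdist, hew]
  exact h
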